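/- With the matrix R from the previous construction (first column (h_1,…,h_{s-1})^T, first row (h_1, -δ_2, …, -δ_{s-1}), diagonal entries Δ_2, …, Δ_{s-1}, zeros elsewhere), the determinant of R equals d · d_1^{s-3} / (gcd(d_1,d_2) · gcd(d_1,d_3) ⋯ gcd(d_1,d_{s-1})). -/

import Mathlib

/-- the determinant of the matrix `R` from the previous construction equals
`d · d_1^{s-3} / (gcd(d_1,d_2) ⋯ gcd(d_1,d_{s-1}))`.  Here `s - 1 = m + 2`, so
`s - 3 = m`. -/
theorem stmt5 (m : ℕ) (d : Fin (m + 2) → ℤ) (hd : ∀ i, 0 < d i)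
    (h : Fin (m + 2) → ℤ) (hB : ∑ i, h i * d i = Finset.univ.gcd d) :
    Matrix.det
      (fun i j : Fin (m + 2) =>
        if j = 0 then h i
        else if i = 0 then -(d j / (Int.gcd (d 0) (d j) : ℤ))
        else if i = j then d 0 / (Int.gcd (d 0) (d j) : ℤ)
        else 0) =
      Finset.univ.gcd d * (d 0) ^ m /
        ∏ i ∈ Finset.univ.erase (0 : Fin (m + 2)), (Int.gcd (d 0) (d i) : ℤ) := by
  have hd0 : d 0 ≠ 0 := (hd 0).ne'
  set G : ℤ := Finset.univ.gcd d with hG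
  set g : Fin (m + 2) → ℤ := fun j => (Int.gcd (d 0) (d j) : ℤ) with hg
  have hgpos : ∀ j, 0 < g j := by
    intro j
    have h0 : Int.gcd (d 0) (d j) ≠ 0 := fun h0 => hd0 (Int.gcd_eq_zero_iff.mp h0).1
    simp only [hg]
    exact_mod_cast Nat.pos_of_ne_zero h0
  set R : Matrix (Fin (m + 2)) (Fin (m + 2)) ℤ := Matrix.of (fun i j : Fin (m + 2) =>
        if j = 0 then h i
        else if i = 0 then -(d j / g j)
        else if i = j then d 0 / g j
        else 0) with hR
  set v : Fin (m + 2) → ℤ := fun j => if j = 0 then 1 else g j with hv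
  set M : Matrix (Fin (m + 2)) (Fin (m + 2)) ℤ := Matrix.of (fun i j => v j * R i j) with hM
  have hMentry : ∀ i j, M i j =
      if j = 0 then h i else if i = 0 then -(d j) else if i = j then d 0 else 0 := by
    intro i j
    by_cases hj : j = 0
    · simp [hM, hR, hv, hj]
    · by_cases hi : i = 0
      · have : g j * (d j / g j) = d j := Int.mul_ediv_cancel' (Int.gcd_dvd_right (d 0) (d j))
        simp [hM, hR, hv, hj, hi, mul_neg, this]
      · by_cases hij : i = j
        · have : g j * (d 0 / g j) = d 0 := Int.mul_ediv_cancel' (Int.gcd_dvd_left (d 0) (d j))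
          simp [hM, hR, hv, hj, hi, hij, this]
        · simp [hM, hR, hv, hj, hi, hij]
  set P : ℤ := ∏ i ∈ Finset.univ.erase (0 : Fin (m + 2)), g i with hP
  have hPpos : 0 < P := Finset.prod_pos fun i _ => hgpos i
  -- det M = P * det R
  have hdetM : M.det = P * R.det := by
    rw [hM, Matrix.det_mul_row v R]
    congr 1
    rw [← Finset.mul_prod_erase Finset.univ v (Finset.mem_univ 0)]
    simp only [hv, if_pos rfl, one_mul]
    exact Finset.prod_congr rfl fun i hi => by
      simp [Finset.mem_erase.mp hi |>.1]
  -- row operation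
  set N : Matrix (Fin (m + 2)) (Fin (m + 2)) ℤ :=
    M.updateRow 0 (∑ k, d k • M k) with hN
  have hdetN : N.det = d 0 * M.det := by
    rw [hN, Matrix.det_updateRow_sum M 0 d]; rfl
  have hNrow0 : ∀ j, N 0 j = if j = 0 then G else 0 := by
    intro j
    have : N 0 j = ∑ k, d k * M k j := by
      simp [hN, Matrix.updateRow_apply, Finset.sum_apply]
    rw [this]
    by_cases hj : j = 0
    · subst hj
      simp only [if_pos rfl]
      rw [← hB]
      exact Finset.sum_congr rfl fun k _ => by rw [hMentry, if_pos rfl, mul_comm]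
    · rw [if_neg hj]
      have h0mem : (0 : Fin (m + 2)) ∈ Finset.univ := Finset.mem_univ _
      rw [← Finset.add_sum_erase Finset.univ _ h0mem]
      have hjmem : j ∈ Finset.univ.erase (0 : Fin (m + 2)) :=
        Finset.mem_erase.mpr ⟨hj, Finset.mem_univ _⟩
      rw [← Finset.add_sum_erase _ _ hjmem]
      have h1 : d 0 * M 0 j = -(d 0 * d j) := by simp [hMentry, hj]
      have h2 : d j * M j j = d j * d 0 := by simp [hMentry, hj]
      have h3 : ∑ k ∈ (Finset.univ.erase (0 : Fin (m + 2))).erase j, d k * M k j = 0 := by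
        refine Finset.sum_eq_zero fun k hk => ?_
        have hkj := (Finset.mem_erase.mp hk).1
        have hk0 := (Finset.mem_erase.mp (Finset.mem_erase.mp hk).2).1
        rw [hMentry, if_neg hj, if_neg hk0, if_neg hkj, mul_zero]
      rw [h1, h2, h3]; ring
  have hNtri : N.BlockTriangular OrderDual.toDual := by
    intro i j hij
    have hij' : i < j := hij
    have hj : j ≠ 0 := fun hj => by simp [hj] at hij'
    by_cases hi : i = 0
    · rw [hi, hNrow0, if_neg hj]
    · have : N i j = M i j := by simp [hN, Matrix.updateRow_ne hi]
      rw [this, hMentry, if_neg hj, if_neg hi, if_neg hij'.ne]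
  have hdetN' : N.det = G * d 0 ^ (m + 1) := by
    rw [Matrix.det_of_lowerTriangular N hNtri]
    rw [← Finset.mul_prod_erase Finset.univ _ (Finset.mem_univ (0 : Fin (m + 2)))]
    rw [hNrow0, if_pos rfl]
    congr 1
    have : ∀ i ∈ Finset.univ.erase (0 : Fin (m + 2)), N i i = d 0 := by
      intro i hi
      have hi0 := (Finset.mem_erase.mp hi).1
      simp [hN, Matrix.updateRow_ne hi0, hMentry, hi0]
    rw [Finset.prod_congr rfl this, Finset.prod_const]
    congr 1
    rw [Finset.card_erase_of_mem (Finset.mem_univ _), Finset.card_univ, Fintype.card_fin]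
    omega
  have hdetM' : M.det = G * d 0 ^ m := by
    have : d 0 * M.det = d 0 * (G * d 0 ^ m) := by
      rw [← hdetN, hdetN', pow_succ]; ring
    exact mul_left_cancel₀ hd0 this
  have key : P * R.det = G * d 0 ^ m := by rw [← hdetM, hdetM']
  show R.det = G * d 0 ^ m / P
  rw [← key, Int.mul_ediv_cancel_left _ hPpos.ne']
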